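/- Let P be an n×n column stochastic matrix with P_{jj} > 0 for all j, let τ̄ ∈ ℕ, and let τ(k, j, i) ∈ {0, …, τ̄} be delay functions with τ(k, j, j) = 0. Let x̄ : ℕ → ℝ^{(τ̄+1)n} evolve by x̄[k+1] = P̄[k] x̄[k] with x̄[0] = (x₀; 0; …; 0) for some x₀ ∈ ℝⁿ (all virtual coordinates initialized to zero). Then the first n coordinates of x̄ satisfy the delayed iteration driven by P and τ: for all k ≥ 0 and all j ∈ {1, …, n}, x̄_j[k+1] = Σ_{i=1}^n Σ_{s=0}^{k} [s + τ(s, j, i) = k] · P_{ji} · x̄_i[s], with x̄_j[0] = x₀(j). -/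

import Mathlib

open Matrix Filter

/-- An `N × N` real matrix is column stochastic if all entries are nonnegative and
each column sums to `1`. -/
def ColStoch {N : Type*} [Fintype N] (A : Matrix N N ℝ) : Prop :=
  (∀ j i, 0 ≤ A j i) ∧ ∀ i, ∑ j, A j i = 1

/-- The augmented `(τ̄+1)n × (τ̄+1)n` matrix `P̄[k]`, indexed by pairs `(r, j)` where
`r ∈ Fin (τ̄+1)` is the block (virtual-delay) index and `j ∈ Fin n` is the node index.
Block column `0` contains the blocks `P_r[k]` (with `P_r[k](j,i) = P(j,i)` if
`τ(k,j,i) = r` and `0` otherwise); the block in block-row `s-1`, block-column `s`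
is the identity for `s = 1, …, τ̄`; all other blocks are zero. -/
def AugMat (n τbar : ℕ) (P : Matrix (Fin n) (Fin n) ℝ)
    (τ : ℕ → Fin n → Fin n → ℕ) (k : ℕ) :
    Matrix (Fin (τbar + 1) × Fin n) (Fin (τbar + 1) × Fin n) ℝ :=
  fun q p =>
    if p.1.val = 0 then (if τ k q.2 p.2 = q.1.val then P q.2 p.2 else 0)
    else if q.1.val + 1 = p.1.val ∧ q.2 = p.2 then 1 else 0

/-- The word `P̄[k+ℓ] ⋯ P̄[k+2] ⬝ P̄[k+1]` of `ℓ` consecutive augmented matrices. -/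
def Word (n τbar : ℕ) (P : Matrix (Fin n) (Fin n) ℝ)
    (τ : ℕ → Fin n → Fin n → ℕ) (k : ℕ) :
    ℕ → Matrix (Fin (τbar + 1) × Fin n) (Fin (τbar + 1) × Fin n) ℝ
  | 0 => 1
  | ℓ + 1 => AugMat n τbar P τ (k + ℓ + 1) * Word n τbar P τ k ℓ

/-- A column stochastic matrix `B` is SIA if its powers `B^m` converge (entrywise)
to a matrix of the form `c ⬝ 𝟙ᵀ` for some nonnegative vector `c`. -/
def IsSIA {N : Type*} [Fintype N] [DecidableEq N] (B : Matrix N N ℝ) : Prop :=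
  ColStoch B ∧ ∃ c : N → ℝ, (∀ j, 0 ≤ c j) ∧
    Tendsto (fun m => B ^ m) atTop (nhds (Matrix.of fun j _ => c j))

theorem statement7 (n : ℕ)
    (P : Matrix (Fin n) (Fin n) ℝ) (hP : ColStoch P)
    (hdiag : ∀ j, 0 < P j j)
    (τbar : ℕ) (τ : ℕ → Fin n → Fin n → ℕ)
    (hτle : ∀ k j i, τ k j i ≤ τbar)
    (hτself : ∀ k j, τ k j j = 0)
    (x0 : Fin n → ℝ) (xbar : ℕ → Fin (τbar + 1) × Fin n → ℝ)
    (hx0 : xbar 0 = fun p => if p.1.val = 0 then x0 p.2 else 0)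
    (hx : ∀ k, xbar (k + 1) = (AugMat n τbar P τ k).mulVec (xbar k)) :
    (∀ j : Fin n, xbar 0 (0, j) = x0 j) ∧
      ∀ (k : ℕ) (j : Fin n), xbar (k + 1) (0, j) =
        ∑ i, ∑ s ∈ Finset.range (k + 1),
          if s + τ s j i = k then P j i * xbar s (0, i) else 0 := by
  have step : ∀ (k : ℕ) (r : Fin (τbar + 1)) (j : Fin n),
      xbar (k + 1) (r, j) =
        (∑ i, if τ k j i = r.val then P j i * xbar k (0, i) else 0) +
        ∑ r' : Fin (τbar + 1), if r.val + 1 = r'.val then xbar k (r', j) else 0 := by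
    intro k r j
    rw [hx]
    simp only [mulVec, dotProduct, Fintype.sum_prod_type, AugMat]
    have h1 : ∀ r' : Fin (τbar + 1),
        (∑ i, (if r'.val = 0 then (if τ k j i = r.val then P j i else 0)
            else if r.val + 1 = r'.val ∧ j = i then 1 else 0) * xbar k (r', i))
        = (if r'.val = 0 then
            ∑ i, if τ k j i = r.val then P j i * xbar k (0, i) else 0 else 0)
          + (if r.val + 1 = r'.val then xbar k (r', j) else 0) := by
      intro r'
      by_cases h0 : r'.val = 0
      · have hr0 : r' = 0 := Fin.ext h0
        subst hr0
        simp [ite_mul]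
      · simp only [h0, if_false, if_neg h0]
        by_cases h2 : r.val + 1 = r'.val
        · simp only [h2, true_and, if_pos rfl, zero_add]
          rw [Finset.sum_eq_single j]
          · simp
          · intro i _ hij
            simp [Ne.symm hij]
          · simp
        · have : ∀ i : Fin n, ¬(r.val + 1 = r'.val ∧ j = i) := fun i h => h2 h.1
          simp [h2, this]
    rw [Finset.sum_congr rfl (fun r' _ => h1 r'), Finset.sum_add_distrib]
    congr 1
    have : ∀ r' : Fin (τbar + 1), (r'.val = 0) = (r' = 0) := by
      intro r'; exact propext ⟨fun h => Fin.ext h, fun h => by rw [h]; simp⟩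
    simp only [this]
    rw [Finset.sum_ite_eq' Finset.univ (0 : Fin (τbar + 1))]
    simp
  have key : ∀ (k : ℕ) (r : Fin (τbar + 1)) (j : Fin n),
      xbar (k + 1) (r, j) =
        ∑ i, ∑ s ∈ Finset.range (k + 1),
          if s + τ s j i = k + r.val then P j i * xbar s (0, i) else 0 := by
    intro k
    induction k with
    | zero =>
      intro r j
      rw [step]
      have hB : (∑ r' : Fin (τbar + 1), if r.val + 1 = r'.val then xbar 0 (r', j) else 0) = 0 := by
        apply Finset.sum_eq_zero
        intro r' _
        by_cases h2 : r.val + 1 = r'.val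
        · rw [if_pos h2, hx0]
          simp [← h2]
        · rw [if_neg h2]
      rw [hB, add_zero]
      simp [Finset.sum_range_one]
    | succ k ih =>
      intro r j
      rw [step]
      have hB : (∑ r' : Fin (τbar + 1), if r.val + 1 = r'.val then xbar (k + 1) (r', j) else 0)
          = ∑ i, ∑ s ∈ Finset.range (k + 1),
              if s + τ s j i = k + 1 + r.val then P j i * xbar s (0, i) else 0 := by
        by_cases hlt : r.val + 1 ≤ τbar
        · have hmem : (⟨r.val + 1, by omega⟩ : Fin (τbar + 1)) ∈ Finset.univ := Finset.mem_univ _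
          rw [Finset.sum_eq_single (⟨r.val + 1, by omega⟩ : Fin (τbar + 1))]
          · rw [if_pos rfl, ih ⟨r.val + 1, by omega⟩ j]
            apply Finset.sum_congr rfl
            intro i _
            apply Finset.sum_congr rfl
            intro s _
            congr 1
            simp only [eq_iff_iff]
            constructor <;> intro h <;> omega
          · intro r' _ hr'
            rw [if_neg]
            intro h
            exact hr' (Fin.ext h.symm)
          · intro h; exact absurd hmem h
        · have hr : r.val = τbar := by have := r.isLt; omega
          have hL : (∑ r' : Fin (τbar + 1), if r.val + 1 = r'.val then xbar (k + 1) (r', j) else 0) = 0 := by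
            apply Finset.sum_eq_zero
            intro r' _
            rw [if_neg]
            intro h
            have := r'.isLt; omega
          rw [hL]
          symm
          apply Finset.sum_eq_zero
          intro i _
          apply Finset.sum_eq_zero
          intro s hs
          rw [if_neg]
          have := hτle s j i
          have := Finset.mem_range.mp hs
          omega
      rw [hB]
      rw [← Finset.sum_add_distrib]
      apply Finset.sum_congr rfl
      intro i _
      conv_rhs => rw [Finset.sum_range_succ]
      have h3 : (k + 1 + τ (k + 1) j i = k + 1 + r.val) ↔ (τ (k + 1) j i = r.val) := by omega
      rw [if_congr h3 rfl rfl, add_comm]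
  constructor
  · intro j
    rw [hx0]
    simp
  · intro k j
    have h := key k 0 j
    simpa using h
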